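/- Let k ≥ 0 and let P₁, P₂ be real polynomials in the two variables x, y of total degree at most k. Then x P₁ + y P₂ = 0 if and only if there exists a polynomial Q in x, y of total degree at most k − 1 such that P₁ = −y Q and P₂ = x Q. -/

import Mathlib

open MvPolynomial

noncomputable section

/-- Real polynomials in the two variables `x, y` (indexed `0, 1`). -/
abbrev P2 := MvPolynomial (Fin 2) ℝ

/-- Membership in `𝒫²_m`, the space of polynomials of total degree at most `m`,
with the convention `𝒫²_m = {0}` for `m < 0`. -/
def memP2 (m : ℤ) (p : P2) : Prop := p = 0 ∨ (p.totalDegree : ℤ) ≤ m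

lemma prime_X0 : Prime (X 0 : P2) := by
  rw [← MulEquiv.prime_iff (MvPolynomial.finSuccEquiv ℝ 1).toMulEquiv]
  simpa [MvPolynomial.finSuccEquiv_X_zero] using
    (Polynomial.prime_X : Prime (Polynomial.X : Polynomial (MvPolynomial (Fin 1) ℝ)))

lemma X0_not_dvd_X1 : ¬ (X 0 : P2) ∣ X 1 := by
  intro h
  have := (MvPolynomial.eval (fun i : Fin 2 => if i = 0 then (0:ℝ) else 1)).map_dvd h
  simp at this

lemma totalDegree_X_mul (Q : P2) (hQ : Q ≠ 0) (i : Fin 2) :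
    Q.totalDegree + 1 ≤ (X i * Q).totalDegree := by
  obtain ⟨s, hs, hdeg⟩ := Finset.exists_mem_eq_sup Q.support
    (MvPolynomial.support_nonempty.mpr hQ) (fun s => s.sum fun _ e => e)
  have hcoeff : MvPolynomial.coeff (Finsupp.single i 1 + s) (X i * Q) ≠ 0 := by
    rw [MvPolynomial.coeff_X_mul]
    exact MvPolynomial.mem_support_iff.mp hs
  have hle := MvPolynomial.le_totalDegree (MvPolynomial.mem_support_iff.mpr hcoeff)
  have heq : Q.totalDegree + 1 = (Finsupp.single i 1 + s).sum fun _ e => e := by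
    rw [Finsupp.sum_add_index (by simp) (by intros; rfl)]
    simp [MvPolynomial.totalDegree, hdeg, add_comm]
  exact heq ▸ hle

/-- Two-dimensional characterization of the trace-free Koszul space: for `P₁, P₂` of total
degree at most `k`, `x P₁ + y P₂ = 0` iff `P₁ = -y Q` and `P₂ = x Q` for some `Q` of total
degree at most `k - 1`. -/
theorem trace_free_characterization_2d (k : ℕ) (P₁ P₂ : P2)
    (h1 : memP2 (k : ℤ) P₁) (h2 : memP2 (k : ℤ) P₂) :
    X 0 * P₁ + X 1 * P₂ = 0 ↔
    ∃ Q : P2, memP2 ((k : ℤ) - 1) Q ∧ P₁ = -(X 1 * Q) ∧ P₂ = X 0 * Q := by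
  constructor
  · intro h
    have hdvd : (X 0 : P2) ∣ X 1 * P₂ := ⟨-P₁, by linear_combination h⟩
    have hQ : (X 0 : P2) ∣ P₂ := (prime_X0.dvd_mul.mp hdvd).resolve_left X0_not_dvd_X1
    obtain ⟨Q, rfl⟩ := hQ
    refine ⟨Q, ?_, ?_, rfl⟩
    · by_cases hQ0 : Q = 0
      · exact Or.inl hQ0
      · right
        have hd := totalDegree_X_mul Q hQ0 0
        rcases h2 with h2 | h2
        · exact absurd h2 (mul_ne_zero (MvPolynomial.X_ne_zero 0) hQ0)
        · omega
    · have : X 0 * (P₁ + X 1 * Q) = 0 := by linear_combination h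
      have := (mul_eq_zero.mp this).resolve_left (MvPolynomial.X_ne_zero 0)
      linear_combination this
  · rintro ⟨Q, _, rfl, rfl⟩
    ring
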